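/- If (C,D) ∈ 𝓒 with D ≠ [ε], and UV^ω ∩ A·CD^ω ≠ ∅ for classes A, U, V with UV = U, VV = V, then U factors as U = A·Y for some class Y with YV^ω ∩ CD^ω ≠ ∅. -/

import Mathlib

variable {Q : Type*} {A : Type*}

/-- Reachability in a nondeterministic automaton: `q` is reachable from `p` reading `w`. -/
def Reach (δ : Q → A → Set Q) : Q → List A → Q → Prop
  | p, [], q => p = q
  | p, a :: w, q => ∃ r ∈ δ p a, Reach δ r w q

/-- Reachability visiting some final state along the way (possibly the endpoints). -/
def ReachF (δ : Q → A → Set Q) (Fs : Set Q) (p : Q) (w : List A) (q : Q) : Prop :=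
  ∃ u v r, w = u ++ v ∧ r ∈ Fs ∧ Reach δ p u r ∧ Reach δ r v q

/-- The relation ∼ : `w ∼ u` iff for all states `p q`, reachability and
reachability-through-final-states via `w` and via `u` coincide. -/
def Sim (δ : Q → A → Set Q) (Fs : Set Q) (w u : List A) : Prop :=
  ∀ p q : Q, (Reach δ p w q ↔ Reach δ p u q) ∧ (ReachF δ Fs p w q ↔ ReachF δ Fs p u q)

/-- The class of a word in 𝒬 = Σ⁺/∼ ⊎ {[ε]} : for a nonempty word its ∼-class,
and `[ε] = {ε}` for the empty word. -/
def wordClass (δ : Q → A → Set Q) (Fs : Set Q) (w : List A) : Set (List A) :=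
  {u | (w = [] ∧ u = []) ∨ (w ≠ [] ∧ u ≠ [] ∧ Sim δ Fs w u)}

/-- `C` is an element of 𝒬. -/
def IsClass (δ : Q → A → Set Q) (Fs : Set Q) (C : Set (List A)) : Prop :=
  ∃ w : List A, C = wordClass δ Fs w

/-- Elementwise concatenation of languages of finite words. -/
def mulSet (L M : Set (List A)) : Set (List A) := Set.image2 (· ++ ·) L M

/-- Monoid multiplication of classes: the class of the concatenation of representatives. -/
def classMul (δ : Q → A → Set Q) (Fs : Set Q) (C D : Set (List A)) : Set (List A) :=
  {v | ∃ w ∈ C, ∃ u ∈ D, v ∈ wordClass δ Fs (w ++ u)}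

/-- Finite star of a language. -/
def starSet (L : Set (List A)) : Set (List A) :=
  {w | ∃ l : List (List A), (∀ u ∈ l, u ∈ L) ∧ w = l.flatten}

/-- Possibly infinite words over `A` : Σ^{≤ω}, as stable `Option`-valued streams. -/
def Word (A : Type*) : Type _ := {g : ℕ → Option A // ∀ n, g n = none → g (n + 1) = none}

/-- A finite word as an element of Σ^{≤ω}. -/
def ofList (w : List A) : Word A :=
  ⟨fun n => w[n]?, fun n h => by
    rw [List.getElem?_eq_none_iff] at *
    omega⟩

/-- An infinite word as an element of Σ^{≤ω}. -/
def ofStream (s : ℕ → A) : Word A := ⟨fun n => some (s n), fun n h => by simp at h⟩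

/- The (possibly infinite) concatenation `f 0 · f 1 · f 2 ⋯` of a sequence of finite
words, as an element of Σ^{≤ω}. -/
open Classical in
noncomputable def prodWord (f : ℕ → List A) : Word A :=
  ⟨fun n =>
    if h : ∃ k, n < ((List.range k).flatMap f).length then
      ((List.range h.choose).flatMap f)[n]?
    else none, by
    intro n hn
    dsimp only at hn ⊢
    by_cases h : ∃ k, n < ((List.range k).flatMap f).length
    · exfalso
      rw [dif_pos h, List.getElem?_eq_none_iff] at hn
      have := h.choose_spec
      omega
    · have h2 : ¬ ∃ k, n + 1 < ((List.range k).flatMap f).length := by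
        push_neg at h ⊢
        intro k
        have := h k
        omega
      rw [dif_neg h2]⟩

/-- Concatenation of a finite word with a possibly infinite word. -/
def catWord (u : List A) (w : Word A) : Word A :=
  ⟨fun n => if n < u.length then u[n]? else w.1 (n - u.length), by
    intro n hn
    dsimp only at hn ⊢
    by_cases h : n < u.length
    · exfalso
      rw [if_pos h, List.getElem?_eq_none_iff] at hn
      omega
    · rw [if_neg h] at hn
      have h2 : ¬ n + 1 < u.length := by omega
      rw [if_neg h2]
      have h3 : n + 1 - u.length = (n - u.length) + 1 := by omega
      rw [h3]
      exact w.2 _ hn⟩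

/-- `CD^ω` : all words `w₀w₁w₂⋯` with `w₀ ∈ C` and `wᵢ ∈ D` for `i ≥ 1`. -/
def omegaProd (C D : Set (List A)) : Set (Word A) :=
  {w | ∃ f : ℕ → List A, f 0 ∈ C ∧ (∀ i, 1 ≤ i → f i ∈ D) ∧ w = prodWord f}

/-- `L^ω` : all words `w₁w₂w₃⋯` with all `wᵢ ∈ L`. -/
def omegaPow (L : Set (List A)) : Set (Word A) :=
  {w | ∃ f : ℕ → List A, (∀ i, f i ∈ L) ∧ w = prodWord f}

/-- Acceptance of a finite word (as an NFA). -/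
def NFAAccepts (δ : Q → A → Set Q) (q0 : Q) (Fs : Set Q) (w : List A) : Prop :=
  ∃ q ∈ Fs, Reach δ q0 w q

/-- Büchi acceptance of an infinite word: a run from `q0` visiting `Fs` infinitely often. -/
def BuchiAccepts (δ : Q → A → Set Q) (q0 : Q) (Fs : Set Q) (s : ℕ → A) : Prop :=
  ∃ r : ℕ → Q, r 0 = q0 ∧ (∀ n, r (n + 1) ∈ δ (r n) (s n)) ∧ {n | r n ∈ Fs}.Infinite

/-- The language `L(𝔄) ⊆ Σ^{≤ω}` of the extended Büchi automaton: finite words accepted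
as an NFA together with infinite words accepted as a Büchi automaton. -/
def LangOf (δ : Q → A → Set Q) (q0 : Q) (Fs : Set Q) : Set (Word A) :=
  {w | (∃ l : List A, w = ofList l ∧ NFAAccepts δ q0 Fs l) ∨
       (∃ s : ℕ → A, w = ofStream s ∧ BuchiAccepts δ q0 Fs s)}

/-- The set 𝒬 of classes, as a type. -/
def QClass (δ : Q → A → Set Q) (Fs : Set Q) : Type _ := {C : Set (List A) // IsClass δ Fs C}

/-- The set 𝓒 of pairs `(C, D)` of classes with `CD = C` and `DD = D`, as a type. -/
def CPair (δ : Q → A → Set Q) (Fs : Set Q) : Type _ :=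
  {p : Set (List A) × Set (List A) //
    IsClass δ Fs p.1 ∧ IsClass δ Fs p.2 ∧
    classMul δ Fs p.1 p.2 = p.1 ∧ classMul δ Fs p.2 p.2 = p.2}

/-- The language `CD^ω` denoted by an element of 𝓒. -/
def concPair {δ : Q → A → Set Q} {Fs : Set Q} (p : CPair δ Fs) : Set (Word A) :=
  omegaProd p.1.1 p.1.2

/-- A subset 𝒱 ⊆ 𝓒 is closed: whenever `UV^ω ∩ CD^ω ≠ ∅` for `(C,D) ∈ 𝒱` and
`(U,V) ∈ 𝓒`, then `(U,V) ∈ 𝒱`. -/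
def IsClosedC {δ : Q → A → Set Q} {Fs : Set Q} (𝒱 : Set (CPair δ Fs)) : Prop :=
  ∀ p ∈ 𝒱, ∀ q : CPair δ Fs, (concPair q ∩ concPair p).Nonempty → q ∈ 𝒱

/-- Pre-abstraction 𝔣. -/
def frakF (δ : Q → A → Set Q) (Fs : Set Q) (V : Set (Word A)) : Set (CPair δ Fs) :=
  {p | (concPair p ∩ V).Nonempty}

/-- Pre-concretization 𝔤. -/
def frakG {δ : Q → A → Set Q} {Fs : Set Q} (𝒱 : Set (CPair δ Fs)) : Set (Word A) :=
  ⋃ p ∈ 𝒱, concPair p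

/-- Closure 𝔠(𝒱) = ⋃_{n ≥ 1} (𝔣 ∘ 𝔤)ⁿ(𝒱). -/
def frakC {δ : Q → A → Set Q} {Fs : Set Q} (𝒱 : Set (CPair δ Fs)) : Set (CPair δ Fs) :=
  ⋃ n : ℕ, (fun 𝒲 => frakF δ Fs (frakG 𝒲))^[n + 1] 𝒱

/-- Abstraction α_* -/
def alphaStar (δ : Q → A → Set Q) (Fs : Set Q) (U : Set (List A)) : Set (QClass δ Fs) :=
  {C | (C.1 ∩ U).Nonempty}

/-- Concretization γ_* -/
def gammaStar {δ : Q → A → Set Q} {Fs : Set Q} (𝒰 : Set (QClass δ Fs)) : Set (List A) :=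
  ⋃ C ∈ 𝒰, C.1

/-- Abstraction α_{≤ω}. -/
def alphaOmega (δ : Q → A → Set Q) (Fs : Set Q) (V : Set (Word A)) : Set (CPair δ Fs) :=
  frakC (frakF δ Fs V)

/-- Concretization γ_{≤ω}. -/
def gammaOmega {δ : Q → A → Set Q} {Fs : Set Q} (𝒱 : Set (CPair δ Fs)) : Set (Word A) :=
  frakG 𝒱

section AuxLemmas

variable {Q' A' : Type*} (δ : Q' → A' → Set Q') (Fs : Set Q')

lemma reach_append (p q : Q') (u v : List A') :
    Reach δ p (u ++ v) q ↔ ∃ r, Reach δ p u r ∧ Reach δ r v q := by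
  induction u generalizing p with
  | nil => simp [Reach]
  | cons a u ih =>
    simp only [List.cons_append, Reach]
    constructor
    · rintro ⟨r, hr, h⟩
      obtain ⟨s, h1, h2⟩ := (ih r).mp h
      exact ⟨s, ⟨r, hr, h1⟩, h2⟩
    · rintro ⟨s, ⟨r, hr, h1⟩, h2⟩
      exact ⟨r, hr, (ih r).mpr ⟨s, h1, h2⟩⟩

lemma reachF_append (p q : Q') (u v : List A') :
    ReachF δ Fs p (u ++ v) q ↔
      (∃ r, ReachF δ Fs p u r ∧ Reach δ r v q) ∨
      (∃ r, Reach δ p u r ∧ ReachF δ Fs r v q) := by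
  constructor
  · rintro ⟨s, t, r, hst, hrF, h1, h2⟩
    rcases List.append_eq_append_iff.mp hst.symm with ⟨m, hm1, hm2⟩ | ⟨m, hm1, hm2⟩
    · -- u = s ++ m, t = m ++ v
      subst hm1; subst hm2
      obtain ⟨r', hr1, hr2⟩ := (reach_append δ r q m v).mp h2
      exact Or.inl ⟨r', ⟨s, m, r, rfl, hrF, h1, hr1⟩, hr2⟩
    · -- s = u ++ m, v = m ++ t
      subst hm1; subst hm2
      obtain ⟨r', hr1, hr2⟩ := (reach_append δ p r u m).mp h1
      exact Or.inr ⟨r', hr1, ⟨m, t, r, rfl, hrF, hr2, h2⟩⟩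
  · rintro (⟨r, ⟨s, t, r', hst, hF, hh1, hh2⟩, h2⟩ | ⟨r, h1, ⟨s, t, r', hst, hF, hh1, hh2⟩⟩)
    · exact ⟨s, t ++ v, r', by rw [hst, List.append_assoc], hF, hh1,
        (reach_append δ r' q t v).mpr ⟨r, hh2, h2⟩⟩
    · exact ⟨u ++ s, t, r', by rw [hst, List.append_assoc], hF,
        (reach_append δ p r' u s).mpr ⟨r, h1, hh1⟩, hh2⟩

lemma sim_refl (w : List A') : Sim δ Fs w w := fun _ _ => ⟨Iff.rfl, Iff.rfl⟩

lemma sim_symm {w u : List A'} (h : Sim δ Fs w u) : Sim δ Fs u w :=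
  fun p q => ⟨(h p q).1.symm, (h p q).2.symm⟩

lemma sim_trans {w u v : List A'} (h1 : Sim δ Fs w u) (h2 : Sim δ Fs u v) : Sim δ Fs w v :=
  fun p q => ⟨(h1 p q).1.trans (h2 p q).1, (h1 p q).2.trans (h2 p q).2⟩

lemma sim_append {a a' b b' : List A'} (h1 : Sim δ Fs a a') (h2 : Sim δ Fs b b') :
    Sim δ Fs (a ++ b) (a' ++ b') := by
  intro p q
  constructor
  · rw [reach_append, reach_append]
    exact exists_congr fun r => and_congr ((h1 p r).1) ((h2 r q).1)
  · rw [reachF_append, reachF_append]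
    exact or_congr
      (exists_congr fun r => and_congr ((h1 p r).2) ((h2 r q).1))
      (exists_congr fun r => and_congr ((h1 p r).1) ((h2 r q).2))

lemma mem_wordClass_self (w : List A') : w ∈ wordClass δ Fs w := by
  by_cases h : w = []
  · exact Or.inl ⟨h, h⟩
  · exact Or.inr ⟨h, h, sim_refl δ Fs w⟩

lemma wordClass_eq_of_mem {w u : List A'} (h : u ∈ wordClass δ Fs w) :
    wordClass δ Fs u = wordClass δ Fs w := by
  rcases h with ⟨hw, hu⟩ | ⟨hw, hu, hs⟩
  · subst hw; subst hu; rfl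
  · ext x
    constructor
    · rintro (⟨h1, h2⟩ | ⟨h1, h2, h3⟩)
      · exact absurd h1 hu
      · exact Or.inr ⟨hw, h2, sim_trans δ Fs hs h3⟩
    · rintro (⟨h1, h2⟩ | ⟨h1, h2, h3⟩)
      · exact absurd h1 hw
      · exact Or.inr ⟨hu, h2, sim_trans δ Fs (sim_symm δ Fs hs) h3⟩

lemma append_mem_wordClass {a a' b b' : List A'}
    (h1 : a' ∈ wordClass δ Fs a) (h2 : b' ∈ wordClass δ Fs b) :
    a' ++ b' ∈ wordClass δ Fs (a ++ b) := by
  rcases h1 with ⟨ha, ha'⟩ | ⟨ha, ha', hsa⟩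
  · subst ha; subst ha'; simpa using h2
  · rcases h2 with ⟨hb, hb'⟩ | ⟨hb, hb', hsb⟩
    · subst hb; subst hb'; simpa using (show a' ∈ wordClass δ Fs a from Or.inr ⟨ha, ha', hsa⟩)
    · exact Or.inr ⟨by simp [ha], by simp [ha'], sim_append δ Fs hsa hsb⟩

lemma classMul_wordClass (a b : List A') :
    classMul δ Fs (wordClass δ Fs a) (wordClass δ Fs b) = wordClass δ Fs (a ++ b) := by
  ext x
  constructor
  · rintro ⟨w, hw, u, hu, hx⟩
    rw [wordClass_eq_of_mem δ Fs (append_mem_wordClass δ Fs hw hu)] at hx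
    exact hx
  · intro hx
    exact ⟨a, mem_wordClass_self δ Fs a, b, mem_wordClass_self δ Fs b, hx⟩

lemma wordClass_nil : wordClass δ Fs ([] : List A') = {([] : List A')} := by
  ext x; simp [wordClass]

/-! ### Word-level lemmas -/

lemma getElem?_of_prefix {α : Type*} {l l' : List α} (h : l <+: l') {n : ℕ}
    (hn : n < l.length) : l'[n]? = l[n]? := by
  obtain ⟨t, rfl⟩ := h
  exact List.getElem?_append_left hn

lemma flat_succ {α : Type*} (f : ℕ → List α) (k : ℕ) :
    (List.range (k+1)).flatMap f = (List.range k).flatMap f ++ f k := by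
  rw [List.range_succ, List.flatMap_append]; simp

lemma flat_cons {α : Type*} (f : ℕ → List α) (k : ℕ) :
    (List.range (k+1)).flatMap f = f 0 ++ (List.range k).flatMap (fun i => f (i+1)) := by
  rw [List.range_succ_eq_map]; simp [List.flatMap_cons, List.flatMap_map]

lemma flat_prefix {α : Type*} (f : ℕ → List α) {k k' : ℕ} (h : k ≤ k') :
    (List.range k).flatMap f <+: (List.range k').flatMap f := by
  obtain ⟨m, rfl⟩ := Nat.exists_eq_add_of_le h
  refine ⟨((List.range m).map (k + ·)).flatMap f, ?_⟩
  rw [← List.flatMap_append, ← List.range_add]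

lemma prodWord_apply_eq (f : ℕ → List A') (k n : ℕ)
    (h : n < ((List.range k).flatMap f).length) :
    (prodWord f).1 n = ((List.range k).flatMap f)[n]? := by
  have hex : ∃ k, n < ((List.range k).flatMap f).length := ⟨k, h⟩
  rw [show (prodWord f).1 n = ((List.range hex.choose).flatMap f)[n]? from dif_pos hex]
  have hc := hex.choose_spec
  rcases le_total hex.choose k with hle | hle
  · exact (getElem?_of_prefix (flat_prefix f hle) hc).symm
  · exact getElem?_of_prefix (flat_prefix f hle) h

lemma prodWord_apply_none (f : ℕ → List A') (n : ℕ)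
    (h : ¬ ∃ k, n < ((List.range k).flatMap f).length) :
    (prodWord f).1 n = none := dif_neg h

lemma prodWord_cons (f : ℕ → List A') :
    prodWord f = catWord (f 0) (prodWord fun i => f (i+1)) := by
  apply Subtype.ext; funext n
  show (prodWord f).1 n =
    if n < (f 0).length then (f 0)[n]? else (prodWord fun i => f (i+1)).1 (n - (f 0).length)
  by_cases hn : n < (f 0).length
  · have h2 : (List.range 1).flatMap f = f 0 := by
      rw [List.range_succ]; simp
    have h1 : n < ((List.range 1).flatMap f).length := by rw [h2]; exact hn
    rw [if_pos hn, prodWord_apply_eq f 1 n h1, h2]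
  · rw [if_neg hn]
    push_neg at hn
    by_cases hex : ∃ k, n - (f 0).length < ((List.range k).flatMap fun i => f (i+1)).length
    · obtain ⟨k, hk⟩ := hex
      have h2 : n < ((List.range (k+1)).flatMap f).length := by
        rw [flat_cons, List.length_append]; omega
      rw [prodWord_apply_eq f (k+1) n h2, prodWord_apply_eq (fun i => f (i+1)) k _ hk,
        flat_cons]
      exact List.getElem?_append_right hn
    · rw [prodWord_apply_none (fun i => f (i+1)) _ hex, prodWord_apply_none f n ?_]
      push_neg at hex ⊢
      intro k
      have h1 := hex k
      have h2 : ((List.range k).flatMap f).length ≤ ((List.range (k+1)).flatMap f).length :=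
        (flat_prefix f (Nat.le_succ k)).length_le
      rw [flat_cons, List.length_append] at h2
      omega

lemma catWord_apply (u : List A') (w : Word A') (n : ℕ) :
    (catWord u w).1 n = if n < u.length then u[n]? else w.1 (n - u.length) := rfl

lemma catWord_assoc (u v : List A') (w : Word A') :
    catWord (u ++ v) w = catWord u (catWord v w) := by
  apply Subtype.ext; funext n
  rw [catWord_apply, catWord_apply, catWord_apply, List.length_append]
  by_cases h1 : n < u.length
  · rw [if_pos (by omega), if_pos h1, List.getElem?_append_left h1]
  · rw [if_neg h1]
    push_neg at h1
    by_cases h2 : n < u.length + v.length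
    · have h3 : n - u.length < v.length := by omega
      rw [if_pos h2, if_pos h3, List.getElem?_append_right h1]
    · push_neg at h2
      have h3 : ¬ n - u.length < v.length := by omega
      have h4 : ¬ n < u.length + v.length := by omega
      have h5 : n - (u.length + v.length) = n - u.length - v.length := by omega
      rw [if_neg h4, if_neg h3, h5]

lemma catWord_left_cancel (u : List A') {w1 w2 : Word A'}
    (h : catWord u w1 = catWord u w2) : w1 = w2 := by
  apply Subtype.ext; funext n
  have := congrArg (fun z : Word A' => z.1 (n + u.length)) h
  simpa [catWord_apply, Nat.add_sub_cancel] using this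

lemma prodWord_split (f : ℕ → List A') (n : ℕ) :
    prodWord f = catWord ((List.range (n+1)).flatMap f) (prodWord fun i => f (i+(n+1))) := by
  induction n with
  | zero =>
    simp only [Nat.zero_add]
    have h1 : (List.range 1).flatMap f = f 0 := by rw [List.range_succ]; simp
    rw [h1]
    exact prodWord_cons f
  | succ n ih =>
    have e2 : (fun i => f (i+1+(n+1))) = fun i => f (i+(n+1+1)) := by
      funext i; congr 1; omega
    rw [ih, prodWord_cons (fun i => f (i+(n+1))), ← catWord_assoc]
    simp only [Nat.zero_add]
    rw [← flat_succ, e2]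

lemma flat_len_lb {α : Type*} (g : ℕ → List α) (hg : ∀ i, 1 ≤ i → g i ≠ []) (k : ℕ) :
    k - 1 ≤ ((List.range k).flatMap g).length := by
  induction k with
  | zero => simp
  | succ k ih =>
    rw [flat_succ, List.length_append]
    rcases Nat.eq_zero_or_pos k with rfl | hk
    · simp
    · have : 0 < (g k).length := List.length_pos_iff.mpr (hg k hk)
      omega

end AuxLemmas


/-- if `(C,D) ∈ 𝓒` with `D ≠ [ε]` and `UV^ω ∩ A·CD^ω ≠ ∅` with `UV = U`,
`VV = V`, then `U = A·Y` for some class `Y` with `YV^ω ∩ CD^ω ≠ ∅`. -/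
theorem key_decomposition {Q A : Type*} [Finite Q] [Finite A]
    (δ : Q → A → Set Q) (Fs : Set Q)
    (Ac U V C D : Set (List A))
    (hAc : IsClass δ Fs Ac) (hU : IsClass δ Fs U) (hV : IsClass δ Fs V)
    (hC : IsClass δ Fs C) (hD : IsClass δ Fs D)
    (hCD : classMul δ Fs C D = C) (hDD : classMul δ Fs D D = D)
    (hDne : D ≠ {([] : List A)})
    (hUV : classMul δ Fs U V = U) (hVV : classMul δ Fs V V = V)
    (hmeet : (omegaProd U V ∩
      {w : Word A | ∃ a ∈ Ac, ∃ x ∈ omegaProd C D, w = catWord a x}).Nonempty) :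
    ∃ Y : Set (List A), IsClass δ Fs Y ∧ classMul δ Fs Ac Y = U ∧
      (omegaProd Y V ∩ omegaProd C D).Nonempty := by
  obtain ⟨w, ⟨f, hf0, hfV, rfl⟩, a, haA, x, ⟨g, hg0, hgD, rfl⟩, heq⟩ := hmeet
  obtain ⟨d, rfl⟩ := hD
  have hdne : d ≠ [] := by
    rintro rfl
    exact hDne (wordClass_nil δ Fs)
  have hgne : ∀ i, 1 ≤ i → g i ≠ [] := by
    intro i hi
    rcases hgD i hi with ⟨h1, _⟩ | ⟨_, h2, _⟩
    · exact absurd h1 hdne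
    · exact h2
  have hx0 : (prodWord g).1 0 ≠ none := by
    have h2 : (0:ℕ) < ((List.range 2).flatMap g).length := by
      have := flat_len_lb g hgne 2; omega
    rw [prodWord_apply_eq g 2 0 h2]
    simp [List.getElem?_eq_getElem h2]
  have hfa : ∃ k, a.length < ((List.range k).flatMap f).length := by
    by_contra hcon
    have h1 : (prodWord f).1 a.length = none := prodWord_apply_none f a.length hcon
    rw [heq] at h1
    rw [catWord_apply, if_neg (lt_irrefl a.length), Nat.sub_self] at h1
    exact hx0 h1
  obtain ⟨k, hk⟩ := hfa
  have hk1 : k ≠ 0 := by rintro rfl; simp at hk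
  obtain ⟨n, rfl⟩ := Nat.exists_eq_succ_of_ne_zero hk1
  set P : List A := (List.range (n+1)).flatMap f with hP
  set f' : ℕ → List A := fun i => f (i+(n+1)) with hf'
  have hsplit : prodWord f = catWord P (prodWord f') := prodWord_split f n
  have hlen : a.length ≤ P.length := le_of_lt hk
  have hpref : ∀ m, m < a.length → P[m]? = a[m]? := by
    intro m hm
    have e := congrArg (fun z : Word A => z.1 m) (hsplit.symm.trans heq)
    simp only [catWord_apply] at e
    rwa [if_pos (lt_of_lt_of_le hm hlen), if_pos hm] at e
  set y : List A := P.drop a.length with hy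
  have hPay : P = a ++ y := by
    have hta : P.take a.length = a := by
      apply List.ext_getElem
      · rw [List.length_take]; omega
      · intro m h1 h2
        have h3 : m < a.length := h2
        have h4 := hpref m h3
        rw [List.getElem?_eq_getElem (by omega : m < P.length),
          List.getElem?_eq_getElem h3] at h4
        simp only [Option.some.injEq] at h4
        simpa [List.getElem_take] using h4
    conv_lhs => rw [← List.take_append_drop a.length P]
    rw [hta]
  have hxeq : prodWord g = catWord y (prodWord f') := by
    apply catWord_left_cancel a
    rw [← heq, hsplit, hPay, catWord_assoc]
  set h : ℕ → List A := fun i => if i = 0 then y else f (i + n) with hh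
  have hhcons : prodWord h = catWord y (prodWord f') := by
    have h0 : h 0 = y := if_pos rfl
    have h1 : (fun i => h (i+1)) = f' := by
      funext i
      simp only [hh, hf']
      rw [if_neg (Nat.succ_ne_zero i)]
      congr 1; omega
    rw [prodWord_cons h, h0, h1]
  have happend : ∀ p ∈ U, ∀ v ∈ V, p ++ v ∈ U := by
    intro p hp v hv
    rw [← hUV]
    exact ⟨p, hp, v, hv, mem_wordClass_self δ Fs _⟩
  have hPU : ∀ m, (List.range (m+1)).flatMap f ∈ U := by
    intro m
    induction m with
    | zero => simpa [flat_cons f 0] using hf0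
    | succ m ih =>
      rw [flat_succ]
      exact happend _ ih _ (hfV (m+1) (by omega))
  obtain ⟨u0, rfl⟩ := hU
  obtain ⟨a0, rfl⟩ := hAc
  have hUP : wordClass δ Fs u0 = wordClass δ Fs P := (wordClass_eq_of_mem δ Fs (hPU n)).symm
  have hAa : wordClass δ Fs a0 = wordClass δ Fs a := (wordClass_eq_of_mem δ Fs haA).symm
  refine ⟨wordClass δ Fs y, ⟨y, rfl⟩, ?_, ?_⟩
  · rw [hAa, classMul_wordClass, ← hPay, ← hUP]
  · refine ⟨prodWord g, ⟨h, ?_, ?_, hxeq.trans hhcons.symm⟩, ⟨g, hg0, hgD, rfl⟩⟩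
    · have h0 : h 0 = y := if_pos rfl
      rw [h0]
      exact mem_wordClass_self δ Fs y
    · intro i hi
      have h1 : h i = f (i + n) := by
        simp only [hh]
        rw [if_neg (by omega : i ≠ 0)]
      rw [h1]
      exact hfV (i + n) (by omega)
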